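/- Let A ⊂ ℝⁿ be a locally BV set and let the charge F be an indefinite R* integral of a function f: cl_*A → ℝ in A with respect to a charge G. Then F is also an indefinite packing R* integral of f in A with respect to G. -/

import Mathlib

open MeasureTheory Metric Set Filter
open scoped ENNReal NNReal

noncomputable section

abbrev En (n : ℕ) : Type := EuclideanSpace ℝ (Fin n)

variable {n : ℕ}

/-- The essential interior of `A`: points of Lebesgue density 1. -/
def essInterior (A : Set (En n)) : Set (En n) :=
  {x | Tendsto (fun r : ℝ => volume (A ∩ ball x r) / volume (ball x r))
      (nhdsWithin 0 (Ioi 0)) (nhds 1)}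

/-- The essential closure of `A`: points of positive upper Lebesgue density. -/
def essClosure (A : Set (En n)) : Set (En n) :=
  {x | 0 < Filter.limsup (fun r : ℝ => volume (A ∩ ball x r) / volume (ball x r))
      (nhdsWithin 0 (Ioi 0))}

/-- The essential boundary of `A`. -/
def essBoundary (A : Set (En n)) : Set (En n) := essClosure A \ essInterior A

/-- Perimeter: the `(n-1)`-dimensional Hausdorff measure of the essential boundary. -/
def perim (E : Set (En n)) : ℝ≥0∞ := μH[(n : ℝ) - 1] (essBoundary E)

/-- A bounded BV set. -/
def IsBVSet (E : Set (En n)) : Prop :=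
  MeasurableSet E ∧ Bornology.IsBounded E ∧ volume E < ⊤ ∧ perim E < ⊤

/-- A locally BV set. -/
def IsLocBVSet (A : Set (En n)) : Prop :=
  MeasurableSet A ∧ ∀ U : Set (En n), IsOpen U → Bornology.IsBounded U →
    μH[(n : ℝ) - 1] (essBoundary A ∩ U) < ⊤

/-- An admissible set: `int_* A ⊆ A ⊆ cl_* A`. -/
def IsAdmissible (A : Set (En n)) : Prop :=
  essInterior A ⊆ A ∧ A ⊆ essClosure A

/-- A charge. -/
def IsCharge (F : Set (En n) → ℝ) : Prop :=
  (∀ A B : Set (En n), IsBVSet A → IsBVSet B → Disjoint A B → F (A ∪ B) = F A + F B) ∧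
  ∀ ε : ℝ, 0 < ε → ∃ η : ℝ, 0 < η ∧ ∀ C : Set (En n), IsBVSet C →
    C ⊆ ball 0 (1 / ε) → perim C < ENNReal.ofReal (1 / ε) →
    volume C < ENNReal.ofReal η → |F C| < ε

/-- Regularity of the pair `(E, x)`. -/
def regPair (E : Set (En n)) (x : En n) : ℝ :=
  if volume E = 0 then 0
  else (volume E).toReal / (Metric.diam (E ∪ {x}) * (perim E).toReal)

/-- Regularity of the set `E`. -/
def regSet (E : Set (En n)) : ℝ :=
  if volume E = 0 then 0
  else (volume E).toReal / (Metric.diam E * (perim E).toReal)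

/-- Relative perimeter of `T` in `E`. -/
def relPerim (T E : Set (En n)) : ℝ≥0∞ :=
  μH[(n : ℝ) - 1] (essBoundary T ∩ essInterior E)

/-- `E` is `ε`-isoperimetric. -/
def IsIsoperimetric (ε : ℝ) (E : Set (En n)) : Prop :=
  ∀ T : Set (En n), IsBVSet T →
    min (perim (E ∩ T)) (perim (E \ T)) ≤ ENNReal.ofReal (1 / ε) * relPerim T E

/-- The seminorm `q̄^ε_{x,r}`. -/
def qSem (ε : ℝ) (x : En n) (r : ℝ) (F : Set (En n) → ℝ) : ℝ≥0∞ :=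
  ⨆ (E : Set (En n)) (_ : IsBVSet E ∧ IsCompact (closure E) ∧ closure E ⊆ ball x r ∧
      x ∈ essClosure E ∧ ε < regPair E x ∧ IsIsoperimetric ε E),
    ENNReal.ofReal |F E|

/-- The seminorm `p̄^ε_{x,r}`. -/
def pSem (ε : ℝ) (x : En n) (r : ℝ) (F : Set (En n) → ℝ) : ℝ≥0∞ :=
  ⨆ (E : Set (En n)) (_ : IsBVSet E ∧ IsCompact (closure E) ∧ closure E ⊆ ball x r ∧
      ε < regPair E x),
    ENNReal.ofReal |F E|

/-- A set of σ-finite `H^{n-1}` measure. -/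
def SigmaFiniteHnm1 (N : Set (En n)) : Prop :=
  ∃ f : ℕ → Set (En n), N ⊆ ⋃ i, f i ∧ ∀ i, μH[(n : ℝ) - 1] (f i) < ⊤

/-- A gage on `S`. -/
def IsGage (S : Set (En n)) (δ : En n → ℝ) : Prop :=
  (∀ x ∈ S, 0 ≤ δ x) ∧ SigmaFiniteHnm1 {x | x ∈ S ∧ δ x = 0}

/-- A packing: finitely many pairwise disjoint open balls. -/
def IsPacking {k : ℕ} (x : Fin k → En n) (r : Fin k → ℝ) : Prop :=
  (∀ i, 0 < r i) ∧ ∀ i j : Fin k, i ≠ j → Disjoint (ball (x i) (r i)) (ball (x j) (r j))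

/-- A `δ`-fine packing with tags in `S`. -/
def IsFinePacking {k : ℕ} (S : Set (En n)) (δ : En n → ℝ) (x : Fin k → En n)
    (r : Fin k → ℝ) : Prop :=
  ∀ i, x i ∈ S ∧ 2 * r i < δ (x i)

/-- `F` is an indefinite packing R* integral of `f` w.r.t. `G`, with tags in `S`
and witnessing constant `τ`. -/
def PackingRStarWith (S : Set (En n)) (τ : ℝ) (F : Set (En n) → ℝ) (f : En n → ℝ)
    (G : Set (En n) → ℝ) : Prop :=
  ∀ ε : ℝ, 0 < ε → ∃ δ : En n → ℝ, IsGage S δ ∧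
    ∀ (k : ℕ) (x : Fin k → En n) (r : Fin k → ℝ), IsPacking x r →
      IsFinePacking S δ x r →
      ∑ i, qSem ε (x i) (τ * r i) (fun E => F E - f (x i) * G E) < ENNReal.ofReal ε

/-- `F` is an indefinite packing R* integral of `f` w.r.t. `G`, with tags in `S`. -/
def PackingRStar (S : Set (En n)) (F : Set (En n) → ℝ) (f : En n → ℝ)
    (G : Set (En n) → ℝ) : Prop :=
  ∃ τ : ℝ, τ ∈ Ioc (0 : ℝ) 1 ∧ PackingRStarWith S τ F f G

/-- `F` is an indefinite packing R integral of `f` w.r.t. `G`, with tags in `S`. -/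
def PackingR (S : Set (En n)) (F : Set (En n) → ℝ) (f : En n → ℝ)
    (G : Set (En n) → ℝ) : Prop :=
  ∃ τ : ℝ, τ ∈ Ioc (0 : ℝ) 1 ∧
    ∀ ε : ℝ, 0 < ε → ∃ δ : En n → ℝ, IsGage S δ ∧
      ∀ (k : ℕ) (x : Fin k → En n) (r : Fin k → ℝ), IsPacking x r →
        IsFinePacking S δ x r →
        ∑ i, pSem ε (x i) (τ * r i) (fun E => F E - f (x i) * G E) < ENNReal.ofReal ε


/-- A BV partition: finitely many pairwise disjoint bounded BV sets with tags. -/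
def IsBVPartition {n : ℕ} {k : ℕ} (E : Fin k → Set (En n)) : Prop :=
  (∀ i, IsBVSet (E i)) ∧ ∀ i j : Fin k, i ≠ j → Disjoint (E i) (E j)

/-- `F` is an indefinite R integral of `f` in `A` with respect to `G`. -/
def RIntegralOn {n : ℕ} (A : Set (En n)) (F : Set (En n) → ℝ) (f : En n → ℝ)
    (G : Set (En n) → ℝ) : Prop :=
  ∀ ε : ℝ, 0 < ε → ∃ δ : En n → ℝ, IsGage (essClosure A) δ ∧
    ∀ (k : ℕ) (E : Fin k → Set (En n)) (x : Fin k → En n),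
      IsBVPartition E → (∀ i, ε < regPair (E i) (x i)) →
      (∀ i, x i ∈ essClosure A ∧ Metric.diam (E i ∪ {x i}) < δ (x i)) →
      ∑ i, |F (E i) - f (x i) * G (E i)| < ε

/-- `F` is an intrinsic indefinite R integral of `f` in `A` with respect to `G`:
only partitions with `⋃ᵢ Aᵢ ⊆ A` are tested. -/
def IntrinsicRIntegralOn {n : ℕ} (A : Set (En n)) (F : Set (En n) → ℝ) (f : En n → ℝ)
    (G : Set (En n) → ℝ) : Prop :=
  ∀ ε : ℝ, 0 < ε → ∃ δ : En n → ℝ, IsGage (essClosure A) δ ∧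
    ∀ (k : ℕ) (E : Fin k → Set (En n)) (x : Fin k → En n),
      IsBVPartition E → (⋃ i, E i) ⊆ A → (∀ i, ε < regPair (E i) (x i)) →
      (∀ i, x i ∈ essClosure A ∧ Metric.diam (E i ∪ {x i}) < δ (x i)) →
      ∑ i, |F (E i) - f (x i) * G (E i)| < ε
/-- `F` is an indefinite R* integral of `f` in `A` with respect to `G`:
sums over strongly `ε`-regular `δ`-fine BV partitions are small. -/
def RStarIntegralOn {n : ℕ} (A : Set (En n)) (F : Set (En n) → ℝ) (f : En n → ℝ)
    (G : Set (En n) → ℝ) : Prop :=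
  ∀ ε : ℝ, 0 < ε → ∃ δ : En n → ℝ, IsGage (essClosure A) δ ∧
    ∀ (k : ℕ) (E : Fin k → Set (En n)) (x : Fin k → En n),
      IsBVPartition E →
      (∀ i, ε < regPair (E i) (x i) ∧ IsIsoperimetric ε (E i) ∧ x i ∈ essClosure (E i)) →
      (∀ i, x i ∈ essClosure A ∧ Metric.diam (E i ∪ {x i}) < δ (x i)) →
      ∑ i, |F (E i) - f (x i) * G (E i)| < ε

/-- If the charge `F` is an indefinite R* integral of `f` in the locally BV set `A`
with respect to the charge `G`, then `F` is also an indefinite packing R* integral of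
`f` in `A` with respect to `G`. -/
theorem packingRStar_of_rStar {n : ℕ} (hn : 1 ≤ n)
    (A : Set (En n)) (hA : IsLocBVSet A)
    (F G : Set (En n) → ℝ) (hF : IsCharge F) (hG : IsCharge G)
    (hFA : ∀ E : Set (En n), IsBVSet E → F E = F (E ∩ A))
    (f : En n → ℝ) (h : RStarIntegralOn A F f G) :
    PackingRStar (essClosure A) F f G := by
  classical
  refine ⟨1, ⟨one_pos, le_rfl⟩, ?_⟩
  intro ε hε
  obtain ⟨δ, hδgage, hδ⟩ := h (ε / 2) (by positivity)
  refine ⟨δ, hδgage, ?_⟩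
  intro k x r hpack hfine
  -- key application of the R* property
  have key : ∀ (m : ℕ) (Es : Fin m → Set (En n)) (xs : Fin m → En n) (rs : Fin m → ℝ),
      (∀ i, xs i ∈ essClosure A) → (∀ i, 0 < rs i) → (∀ i, 2 * rs i < δ (xs i)) →
      (∀ i j, i ≠ j → Disjoint (ball (xs i) (rs i)) (ball (xs j) (rs j))) →
      (∀ i, IsBVSet (Es i) ∧ IsCompact (closure (Es i)) ∧
        closure (Es i) ⊆ ball (xs i) (1 * rs i) ∧ xs i ∈ essClosure (Es i) ∧
        ε < regPair (Es i) (xs i) ∧ IsIsoperimetric ε (Es i)) →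
      ∑ i, |F (Es i) - f (xs i) * G (Es i)| < ε / 2 := by
    intro m Es xs rs hS hr hfin hdisj hP
    have hsub : ∀ i, Es i ⊆ ball (xs i) (rs i) := by
      intro i
      have h1 := (hP i).2.2.1
      rw [one_mul] at h1
      exact subset_closure.trans h1
    apply hδ m Es xs
    · refine ⟨fun i => (hP i).1, fun i j hij => ?_⟩
      exact (hdisj i j hij).mono (hsub i) (hsub j)
    · intro i
      refine ⟨lt_trans (half_lt_self hε) (hP i).2.2.2.2.1, ?_, (hP i).2.2.2.1⟩
      intro T hT
      refine le_trans ((hP i).2.2.2.2.2 T hT) ?_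
      refine mul_le_mul_left (ENNReal.ofReal_le_ofReal ?_) _
      exact one_div_le_one_div_of_le (half_pos hε) (le_of_lt (half_lt_self hε))
    · intro i
      refine ⟨hS i, ?_⟩
      have h1 : Es i ∪ {xs i} ⊆ closedBall (xs i) (rs i) := by
        refine union_subset ((hsub i).trans ball_subset_closedBall) ?_
        simp [(hr i).le]
      have h2 : Metric.diam (closedBall (xs i) (rs i)) ≤ 2 * rs i := by
        refine Metric.diam_le_of_forall_dist_le (by have := hr i; linarith) ?_
        intro a ha b hb
        calc dist a b ≤ dist a (xs i) + dist (xs i) b := dist_triangle _ _ _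
          _ ≤ rs i + rs i := add_le_add (mem_closedBall.mp ha)
                (by rw [dist_comm]; exact mem_closedBall.mp hb)
          _ = 2 * rs i := by ring
      exact lt_of_le_of_lt (le_trans (Metric.diam_mono h1 isBounded_closedBall) h2) (hfin i)
  -- each seminorm is finite
  have hqfin : ∀ i : Fin k,
      qSem ε (x i) (1 * r i) (fun E => F E - f (x i) * G E) ≤ ENNReal.ofReal (ε / 2) := by
    intro i
    refine iSup₂_le fun E hE => ?_
    have hk := key 1 (fun _ => E) (fun _ => x i) (fun _ => r i)
      (fun _ => (hfine i).1) (fun _ => hpack.1 i) (fun _ => (hfine i).2)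
      (fun a b hab => absurd (Subsingleton.elim a b) hab)
      (fun _ => hE)
    rw [Fin.sum_univ_one] at hk
    exact ENNReal.ofReal_le_ofReal hk.le
  set c : ℝ≥0∞ := ENNReal.ofReal (ε / (2 * (k + 1))) with hcdef
  have hc0 : c ≠ 0 := by
    simp only [hcdef, ne_eq, ENNReal.ofReal_eq_zero, not_le]
    positivity
  -- near-optimal selections
  have hsel : ∀ i : Fin k, ∃ E : Set (En n),
      qSem ε (x i) (1 * r i) (fun E => F E - f (x i) * G E) ≠ 0 →
      ((IsBVSet E ∧ IsCompact (closure E) ∧ closure E ⊆ ball (x i) (1 * r i) ∧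
        x i ∈ essClosure E ∧ ε < regPair E (x i) ∧ IsIsoperimetric ε E) ∧
       qSem ε (x i) (1 * r i) (fun E => F E - f (x i) * G E)
         ≤ ENNReal.ofReal |F E - f (x i) * G E| + c) := by
    intro i
    by_cases h0 : qSem ε (x i) (1 * r i) (fun E => F E - f (x i) * G E) = 0
    · exact ⟨∅, fun h' => absurd h0 h'⟩
    · have hlt : qSem ε (x i) (1 * r i) (fun E => F E - f (x i) * G E) - c
          < qSem ε (x i) (1 * r i) (fun E => F E - f (x i) * G E) :=
        ENNReal.sub_lt_self (ne_top_of_le_ne_top ENNReal.ofReal_ne_top (hqfin i)) h0 hc0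
      conv_rhs at hlt => rw [qSem]
      rw [lt_iSup_iff] at hlt
      obtain ⟨E, hlt⟩ := hlt
      rw [lt_iSup_iff] at hlt
      obtain ⟨hPE, hval⟩ := hlt
      have hval' : qSem ε (x i) (1 * r i) (fun E => F E - f (x i) * G E) - c
          ≤ ENNReal.ofReal |F E - f (x i) * G E| := hval.le
      refine ⟨E, fun _ => ⟨hPE, ?_⟩⟩
      rcases le_total c (qSem ε (x i) (1 * r i) (fun E => F E - f (x i) * G E)) with hca | hca
      · calc qSem ε (x i) (1 * r i) (fun E => F E - f (x i) * G E)
            = qSem ε (x i) (1 * r i) (fun E => F E - f (x i) * G E) - c + c :=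
              (tsub_add_cancel_of_le hca).symm
          _ ≤ ENNReal.ofReal |F E - f (x i) * G E| + c := add_le_add_left hval' _
      · exact hca.trans (self_le_add_left _ _)
  choose Esel hEsel using hsel
  set T : Finset (Fin k) := Finset.univ.filter
    (fun i => qSem ε (x i) (1 * r i) (fun E => F E - f (x i) * G E) ≠ 0) with hT
  set e := T.orderIsoOfFin rfl with he
  have hne : ∀ j : Fin T.card,
      qSem ε (x (e j)) (1 * r (e j)) (fun E => F E - f (x (e j)) * G E) ≠ 0 := by
    intro j
    exact (Finset.mem_filter.mp (e j).2).2
  have hinj : Function.Injective (fun j : Fin T.card => ((e j : Fin k))) :=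
    fun a b hab => e.injective (Subtype.ext hab)
  have hkey := key T.card (fun j => Esel (e j)) (fun j => x (e j)) (fun j => r (e j))
    (fun j => (hfine (e j)).1) (fun j => hpack.1 (e j)) (fun j => (hfine (e j)).2)
    (fun a b hab => hpack.2 _ _ (fun hco => hab (hinj hco)))
    (fun j => (hEsel (e j) (hne j)).1)
  have hsum_eq : ∑ j : Fin T.card, |F (Esel (e j)) - f (x (e j)) * G (Esel (e j))|
      = ∑ i ∈ T, |F (Esel i) - f (x i) * G (Esel i)| := by
    rw [← Finset.sum_coe_sort T (fun i => |F (Esel i) - f (x i) * G (Esel i)|)]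
    exact Fintype.sum_equiv e.toEquiv _ _ (fun j => rfl)
  rw [hsum_eq] at hkey
  have hS0 : 0 ≤ ∑ i ∈ T, |F (Esel i) - f (x i) * G (Esel i)| :=
    Finset.sum_nonneg fun _ _ => abs_nonneg _
  have hcard : (T.card : ℝ≥0∞) * c ≤ ENNReal.ofReal (ε / 2) := by
    rw [hcdef, ← ENNReal.ofReal_natCast, ← ENNReal.ofReal_mul (by positivity)]
    apply ENNReal.ofReal_le_ofReal
    have h1 : (T.card : ℝ) ≤ (k : ℝ) + 1 := by
      have h2 : T.card ≤ k := by
        have := Finset.card_filter_le (Finset.univ : Finset (Fin k))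
          (fun i => qSem ε (x i) (1 * r i) (fun E => F E - f (x i) * G E) ≠ 0)
        simpa [hT] using this
      have h3 : (T.card : ℝ) ≤ (k : ℝ) := Nat.cast_le.mpr h2
      linarith
    calc (T.card : ℝ) * (ε / (2 * (k + 1)))
        ≤ ((k : ℝ) + 1) * (ε / (2 * (k + 1))) :=
          mul_le_mul_of_nonneg_right h1 (by positivity)
      _ = ε / 2 := by
          have : (k : ℝ) + 1 ≠ 0 := by positivity
          field_simp
  calc ∑ i : Fin k, qSem ε (x i) (1 * r i) (fun E => F E - f (x i) * G E)
      = ∑ i ∈ T, qSem ε (x i) (1 * r i) (fun E => F E - f (x i) * G E) := by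
        rw [hT]
        exact (Finset.sum_filter_ne_zero _).symm
    _ ≤ ∑ i ∈ T, (ENNReal.ofReal |F (Esel i) - f (x i) * G (Esel i)| + c) := by
        refine Finset.sum_le_sum fun i hi => ?_
        rw [hT, Finset.mem_filter] at hi
        exact (hEsel i hi.2).2
    _ = (∑ i ∈ T, ENNReal.ofReal |F (Esel i) - f (x i) * G (Esel i)|) + T.card • c := by
        rw [Finset.sum_add_distrib, Finset.sum_const]
    _ = ENNReal.ofReal (∑ i ∈ T, |F (Esel i) - f (x i) * G (Esel i)|)
          + (T.card : ℝ≥0∞) * c := by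
        rw [ENNReal.ofReal_sum_of_nonneg fun i _ => abs_nonneg _, nsmul_eq_mul]
    _ ≤ ENNReal.ofReal (∑ i ∈ T, |F (Esel i) - f (x i) * G (Esel i)|)
          + ENNReal.ofReal (ε / 2) := add_le_add_right hcard _
    _ = ENNReal.ofReal ((∑ i ∈ T, |F (Esel i) - f (x i) * G (Esel i)|) + ε / 2) := by
        rw [← ENNReal.ofReal_add hS0 (by positivity)]
    _ < ENNReal.ofReal ε := by
        rw [ENNReal.ofReal_lt_ofReal_iff hε]
        linarith
end
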